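/- The count n in the canonical rate function does not depend on the choice of the completely labeled version of t̄: if t̄⁺ and t̄⁺' are two completely labeled versions of the same term t̄, then the number of matching instantiations (as in the canonical rate definition) computed from t̄⁺ equals that computed from t̄⁺'. -/

import Mathlib

namespace CWC

/-- CWC simple terms over atoms `A`: an atom, or a compartment `(wrap ▹ content)`. -/
inductive Tm (A : Type) : Type where
  | atom : A → Tm A
  | comp : List A → List (Tm A) → Tm A

/-- Structural congruence on CWC terms (lists of simple terms): the least
equivalence relation generated by swapping adjacent elements and by the
congruence rule for compartments (closed under multiset union). -/
inductive Cong {A : Type} : List (Tm A) → List (Tm A) → Prop where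
  | refl (t : List (Tm A)) : Cong t t
  | symm {t u : List (Tm A)} : Cong t u → Cong u t
  | trans {t u v : List (Tm A)} : Cong t u → Cong u v → Cong t v
  | swap (t1 : List (Tm A)) (u w : Tm A) (t2 : List (Tm A)) :
      Cong (t1 ++ u :: w :: t2) (t1 ++ w :: u :: t2)
  | comp {a b : List A} {t u : List (Tm A)} :
      a.Perm b → Cong t u → Cong [Tm.comp a t] [Tm.comp b u]
  | app {t u v w : List (Tm A)} : Cong t u → Cong v w → Cong (t ++ v) (u ++ w)

/-- Simple terms up to structural congruence. -/
def tmSetoid (A : Type) : Setoid (Tm A) :=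
  ⟨fun t u => Cong [t] [u], ⟨fun t => .refl [t], .symm, .trans⟩⟩

/-- The multiset of congruence classes of the components of a term. -/
def clsM {A : Type} (t : List (Tm A)) : Multiset (Quotient (tmSetoid A)) :=
  (t.map (Quotient.mk (tmSetoid A)) : List (Quotient (tmSetoid A)))

/-- CWC contexts: a hole, or a compartment containing a context, in parallel
with a term. -/
inductive Ctx (A : Type) : Type where
  | hole : Ctx A
  | node : List A → Ctx A → List (Tm A) → Ctx A

/-- Filling the hole of a context with a term. -/
def Ctx.fill {A : Type} : Ctx A → List (Tm A) → List (Tm A)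
  | .hole, t => t
  | .node a C v, t => Tm.comp a (C.fill t) :: v

/-- Context composition: replacing the hole of the first context by the second. -/
def Ctx.comp {A : Type} : Ctx A → Ctx A → Ctx A
  | .hole, C' => C'
  | .node a C v, C' => .node a (C.comp C') v

/-- The number of holes of a context. -/
def Ctx.holes {A : Type} : Ctx A → Nat
  | .hole => 1
  | .node _ C _ => C.holes

/-- Open simple terms: atoms, term variables, and compartments whose wrap may
contain wrap variables. -/
inductive OT (A : Type) : Type where
  | atom : A → OT A
  | tvar : Nat → OT A
  | comp : List A → List Nat → List (OT A) → OT A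

/-- An instantiation maps term variables to terms and wrap variables to
multisets of atoms. -/
structure Inst (A : Type) where
  tv : Nat → List (Tm A)
  wv : Nat → List A

mutual
/-- Substitution on open simple terms. -/
def substS {A : Type} (σ : Inst A) : OT A → List (Tm A)
  | .atom a => [.atom a]
  | .tvar X => σ.tv X
  | .comp a xs os => [Tm.comp (a ++ xs.flatMap σ.wv) (substL σ os)]
/-- Substitution on open terms. -/
def substL {A : Type} (σ : Inst A) : List (OT A) → List (Tm A)
  | [] => []
  | o :: os => substS σ o ++ substL σ os
end

/-- A CWC system is a set of rewrite rules; the induced reduction relation is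
generated by rule application in arbitrary contexts, closed under structural
congruence. -/
inductive Red {A : Type} (R : Set (List (OT A) × List (OT A))) :
    List (Tm A) → List (Tm A) → Prop where
  | step {P O : List (OT A)} (σ : Inst A) (C : Ctx A) :
      (P, O) ∈ R → Red R (C.fill (substL σ P)) (C.fill (substL σ O))
  | congr {t t' u u' : List (Tm A)} :
      Cong t t' → Red R t' u' → Cong u' u → Red R t u

mutual
/-- The list of atom occurrences of a simple term. -/
def atomsS {A : Type} : Tm A → List A
  | .atom a => [a]
  | .comp w t => w ++ atomsL t
def atomsL {A : Type} : List (Tm A) → List A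
  | [] => []
  | t :: ts => atomsS t ++ atomsL ts
end

mutual
/-- The list of atom occurrences of an open simple term. -/
def atomsOS {A : Type} : OT A → List A
  | .atom a => [a]
  | .tvar _ => []
  | .comp w _ t => w ++ atomsOL t
def atomsOL {A : Type} : List (OT A) → List A
  | [] => []
  | o :: os => atomsOS o ++ atomsOL os
end

mutual
/-- The list of term-variable occurrences of an open simple term. -/
def tvarsS {A : Type} : OT A → List Nat
  | .atom _ => []
  | .tvar X => [X]
  | .comp _ _ t => tvarsL t
def tvarsL {A : Type} : List (OT A) → List Nat
  | [] => []
  | o :: os => tvarsS o ++ tvarsL os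
end

mutual
/-- The list of wrap-variable occurrences of an open simple term. -/
def wvarsS {A : Type} : OT A → List Nat
  | .atom _ => []
  | .tvar _ => []
  | .comp _ xs t => xs ++ wvarsL t
def wvarsL {A : Type} : List (OT A) → List Nat
  | [] => []
  | o :: os => wvarsS o ++ wvarsL os
end

/-- A pattern is linear when each variable occurs at most once in it. -/
def Linear {A : Type} (P : List (OT A)) : Prop :=
  (∀ X : Nat, (tvarsL P).count X ≤ 1) ∧ (∀ x : Nat, (wvarsL P).count x ≤ 1)

/-- A labelled term (atoms of the form `(a, i)`) is completely labelled when no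
two occurrences of the same atom carry the same label. -/
def CompletelyLabeled {A : Type} (t : List (Tm (A × Nat))) : Prop :=
  (atomsL t).Nodup

mutual
/-- `LabS t t⁺` : the labelled simple term `t⁺` is obtained from `t` by
assigning labels to its atoms. -/
inductive LabS {A : Type} : Tm A → Tm (A × Nat) → Prop where
  | atom (a : A) (i : Nat) : LabS (.atom a) (.atom (a, i))
  | comp {w : List A} {w' : List (A × Nat)} {t : List (Tm A)} {t' : List (Tm (A × Nat))} :
      w'.map Prod.fst = w → LabL t t' → LabS (.comp w t) (.comp w' t')
inductive LabL {A : Type} : List (Tm A) → List (Tm (A × Nat)) → Prop where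
  | nil : LabL [] []
  | cons {t : Tm A} {t' : Tm (A × Nat)} {ts : List (Tm A)} {ts' : List (Tm (A × Nat))} :
      LabS t t' → LabL ts ts' → LabL (t :: ts) (t' :: ts')
end

mutual
/-- Erasure of labels from a labelled simple term. -/
def eraseS {A : Type} : Tm (A × Nat) → Tm A
  | .atom p => .atom p.1
  | .comp w t => .comp (w.map Prod.fst) (eraseL t)
def eraseL {A : Type} : List (Tm (A × Nat)) → List (Tm A)
  | [] => []
  | t :: ts => eraseS t :: eraseL ts
end

mutual
/-- Labelling of open simple terms (variables are unaffected). -/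
inductive LabOS {A : Type} : OT A → OT (A × Nat) → Prop where
  | atom (a : A) (i : Nat) : LabOS (.atom a) (.atom (a, i))
  | tvar (X : Nat) : LabOS (.tvar X) (.tvar X)
  | comp {w : List A} {w' : List (A × Nat)} {xs : List Nat}
      {t : List (OT A)} {t' : List (OT (A × Nat))} :
      w'.map Prod.fst = w → LabOL t t' → LabOS (.comp w xs t) (.comp w' xs t')
inductive LabOL {A : Type} : List (OT A) → List (OT (A × Nat)) → Prop where
  | nil : LabOL [] []
  | cons {o : OT A} {o' : OT (A × Nat)} {os : List (OT A)} {os' : List (OT (A × Nat))} :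
      LabOS o o' → LabOL os os' → LabOL (o :: os) (o' :: os')
end

/-- Erasure of labels from an instantiation. -/
def eraseInst {A : Type} (σ : Inst (A × Nat)) : Inst A :=
  ⟨fun X => eraseL (σ.tv X), fun x => (σ.wv x).map Prod.fst⟩

/-- The set of matching instantiations used in the canonical (mass action) rate
function: instantiations `σ` of the variables of `P` by labelled terms such
that `P'σ ≡ t⁺` for some labelling `P'` of `P` and `|Oσ| ≡ u`. -/
def MatchSet {A : Type} (P O : List (OT A)) (tp : List (Tm (A × Nat)))
    (u : List (Tm A)) : Set (Inst (A × Nat)) :=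
  {σ | (∀ X : Nat, X ∉ tvarsL P → σ.tv X = []) ∧
       (∀ x : Nat, x ∉ wvarsL P → σ.wv x = []) ∧
       (∃ P' : List (OT (A × Nat)), LabOL P P' ∧ Cong (substL σ P') tp) ∧
       Cong (substL (eraseInst σ) O) u}


/-- Encoding of the right suffix of the tape (head symbol first), ended by the
right marker `r`: each compartment's wrap holds one tape symbol and its content
encodes the rest of the suffix. -/
def encR {A : Type} (r : A) : List A → Tm A
  | [] => Tm.comp [r] []
  | b :: bs => Tm.comp [b] [encR r bs]

/-- Nesting of the left portion of the tape (leftmost symbol outermost) around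
an inner term. -/
def nest {A : Type} : List A → List (Tm A) → List (Tm A)
  | [], inner => inner
  | s :: ls, inner => [Tm.comp [s] (nest ls inner)]

/-- Encoding of a Turing machine configuration with left tape `left` (leftmost
first), state `q`, head symbol `hd` and right tape `right`; `l`, `r` are the
end-of-tape markers. -/
def encConf {A : Type} (l r : A) (left : List A) (q hd : A) (right : List A) :
    List (Tm A) :=
  [Tm.comp [l] (nest left (Tm.atom q :: [encR r (hd :: right)]))]

/-- The CWC rule `q·(b·y ▹ (x ▹ Z)·Y)·X ↦ (c·y ▹ q'·(x ▹ Z)·Y)·X` encoding the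
machine transition `(q,b) → (q',c,right)` (nonempty right tape case), with wrap
variables `y = 0`, `x = 1` and term variables `Z = 0`, `Y = 1`, `X = 2`. -/
def tmRule {A : Type} (q b q' c : A) : List (OT A) × List (OT A) :=
  ([OT.atom q,
    OT.comp [b] [0] [OT.comp [] [1] [OT.tvar 0], OT.tvar 1],
    OT.tvar 2],
   [OT.comp [c] [0] [OT.atom q', OT.comp [] [1] [OT.tvar 0], OT.tvar 1],
    OT.tvar 2])

mutual
/-- Number of occurrences of state atoms (atoms in `Q`) in a simple term. -/
def stCountS {A : Type} (Q : A → Prop) [DecidablePred Q] : Tm A → Nat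
  | .atom a => if Q a then 1 else 0
  | .comp w t => (w.countP fun a => decide (Q a)) + stCountL Q t
def stCountL {A : Type} (Q : A → Prop) [DecidablePred Q] : List (Tm A) → Nat
  | [] => 0
  | t :: ts => stCountS Q t + stCountL Q ts
end

mutual
/-- Number of occurrences of state atoms in an open simple term. -/
def stCountOS {A : Type} (Q : A → Prop) [DecidablePred Q] : OT A → Nat
  | .atom a => if Q a then 1 else 0
  | .tvar _ => 0
  | .comp w _ t => (w.countP fun a => decide (Q a)) + stCountOL Q t
def stCountOL {A : Type} (Q : A → Prop) [DecidablePred Q] : List (OT A) → Nat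
  | [] => 0
  | o :: os => stCountOS Q o + stCountOL Q os
end


/-! ### Auxiliary material for `canonical_count_independent` -/

section Aux

variable {A : Type}

mutual
/-- Relabelling of a labelled simple term by a function on labelled atoms. -/
def mapS (f : A × Nat → A × Nat) : Tm (A × Nat) → Tm (A × Nat)
  | .atom a => .atom (f a)
  | .comp w t => .comp (w.map f) (mapL f t)
def mapL (f : A × Nat → A × Nat) : List (Tm (A × Nat)) → List (Tm (A × Nat))
  | [] => []
  | t :: ts => mapS f t :: mapL f ts
end

mutual
def mapOS (f : A × Nat → A × Nat) : OT (A × Nat) → OT (A × Nat)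
  | .atom a => .atom (f a)
  | .tvar X => .tvar X
  | .comp w xs t => .comp (w.map f) xs (mapOL f t)
def mapOL (f : A × Nat → A × Nat) : List (OT (A × Nat)) → List (OT (A × Nat))
  | [] => []
  | o :: os => mapOS f o :: mapOL f os
end

theorem mapL_append (f : A × Nat → A × Nat) (t u : List (Tm (A × Nat))) :
    mapL f (t ++ u) = mapL f t ++ mapL f u := by
  induction t with
  | nil => simp [mapL]
  | cons a t ih => simp [mapL, ih]

mutual
theorem mapS_comp (f g : A × Nat → A × Nat) (t : Tm (A × Nat)) :
    mapS f (mapS g t) = mapS (f ∘ g) t := by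
  cases t with
  | atom a => simp [mapS]
  | comp w u => simp [mapS, mapL_comp]
theorem mapL_comp (f g : A × Nat → A × Nat) (t : List (Tm (A × Nat))) :
    mapL f (mapL g t) = mapL (f ∘ g) t := by
  cases t with
  | nil => simp [mapL]
  | cons a u => simp [mapL, mapS_comp, mapL_comp]
end

mutual
theorem mapS_id (t : Tm (A × Nat)) : mapS id t = t := by
  cases t with
  | atom a => simp [mapS]
  | comp w u => simp [mapS, mapL_id]
theorem mapL_id (t : List (Tm (A × Nat))) : mapL id t = t := by
  cases t with
  | nil => simp [mapL]
  | cons a u => simp [mapL, mapS_id, mapL_id]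
end

theorem cong_map (f : A × Nat → A × Nat) {t u : List (Tm (A × Nat))}
    (h : Cong t u) : Cong (mapL f t) (mapL f u) := by
  induction h with
  | refl t => exact .refl _
  | symm _ ih => exact .symm ih
  | trans _ _ ih1 ih2 => exact .trans ih1 ih2
  | swap t1 a b t2 => simpa [mapL_append, mapL] using Cong.swap (mapL f t1) (mapS f a) (mapS f b) (mapL f t2)
  | comp hp _ ih => exact .comp (hp.map f) ih
  | app _ _ ih1 ih2 => simpa [mapL_append] using Cong.app ih1 ih2

/-- Relabelling of an instantiation. -/
def instMap (f : A × Nat → A × Nat) (σ : Inst (A × Nat)) : Inst (A × Nat) :=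
  ⟨fun X => mapL f (σ.tv X), fun x => (σ.wv x).map f⟩

@[simp] theorem instMap_tv (f : A × Nat → A × Nat) (σ : Inst (A × Nat)) (X : Nat) :
    (instMap f σ).tv X = mapL f (σ.tv X) := rfl

@[simp] theorem instMap_wv' (f : A × Nat → A × Nat) (σ : Inst (A × Nat)) :
    (instMap f σ).wv = fun x => (σ.wv x).map f := rfl

@[simp] theorem instMap_wv (f : A × Nat → A × Nat) (σ : Inst (A × Nat)) (x : Nat) :
    (instMap f σ).wv x = (σ.wv x).map f := rfl

mutual
theorem subst_map_S (f : A × Nat → A × Nat) (σ : Inst (A × Nat)) (o : OT (A × Nat)) :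
    substS (instMap f σ) (mapOS f o) = mapL f (substS σ o) := by
  cases o with
  | atom a => simp [mapOS, substS, mapL, mapS]
  | tvar X => simp [mapOS, substS, instMap]
  | comp w xs os =>
      simp [mapOS, substS, mapL, mapS, subst_map_L, List.map_flatMap,
        Function.comp]
theorem subst_map_L (f : A × Nat → A × Nat) (σ : Inst (A × Nat)) (os : List (OT (A × Nat))) :
    substL (instMap f σ) (mapOL f os) = mapL f (substL σ os) := by
  cases os with
  | nil => simp [mapOL, substL, mapL]
  | cons o os => simp [mapOL, substL, mapL_append, subst_map_S, subst_map_L]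
end

mutual
theorem erase_map_S (f : A × Nat → A × Nat) (hf : ∀ x, (f x).1 = x.1)
    (t : Tm (A × Nat)) : eraseS (mapS f t) = eraseS t := by
  cases t with
  | atom a => simp [mapS, eraseS, hf]
  | comp w u =>
      simp only [mapS, eraseS, erase_map_L f hf u, List.map_map]
      congr 1
      exact List.map_congr_left fun x _ => hf x
theorem erase_map_L (f : A × Nat → A × Nat) (hf : ∀ x, (f x).1 = x.1)
    (t : List (Tm (A × Nat))) : eraseL (mapL f t) = eraseL t := by
  cases t with
  | nil => simp [mapL, eraseL]
  | cons a u => simp [mapL, eraseL, erase_map_S f hf a, erase_map_L f hf u]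
end

theorem eraseInst_instMap (f : A × Nat → A × Nat) (hf : ∀ x, (f x).1 = x.1)
    (σ : Inst (A × Nat)) : eraseInst (instMap f σ) = eraseInst σ := by
  cases σ with
  | mk tv wv =>
      simp only [eraseInst, instMap]
      congr 1
      · funext X; exact erase_map_L f hf _
      · funext x
        simp only [List.map_map]
        exact List.map_congr_left fun y _ => hf y

mutual
theorem labOS_map (f : A × Nat → A × Nat) (hf : ∀ x, (f x).1 = x.1)
    {o : OT A} {o' : OT (A × Nat)} (h : LabOS o o') : LabOS o (mapOS f o') := by
  cases h with
  | atom a i =>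
      have he : f (a, i) = (a, (f (a, i)).2) := Prod.ext (hf (a, i)) rfl
      show LabOS (.atom a) (.atom (f (a, i)))
      rw [he]; exact .atom a _
  | tvar X => exact .tvar X
  | comp hw ht =>
      rename_i w w' xs t t'
      refine .comp ?_ (labOL_map f hf ht)
      rw [List.map_map, ← hw]
      exact List.map_congr_left fun x _ => hf x
theorem labOL_map (f : A × Nat → A × Nat) (hf : ∀ x, (f x).1 = x.1)
    {os : List (OT A)} {os' : List (OT (A × Nat))} (h : LabOL os os') :
    LabOL os (mapOL f os') := by
  cases h with
  | nil => exact .nil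
  | cons h1 h2 => exact .cons (labOS_map f hf h1) (labOL_map f hf h2)
end

mutual
theorem lab_atoms_S {t : Tm A} {tp : Tm (A × Nat)} (h : LabS t tp) :
    (atomsS tp).map Prod.fst = atomsS t := by
  cases h with
  | atom a i => simp [atomsS]
  | comp hw hl => simp [atomsS, lab_atoms_L hl, hw]
theorem lab_atoms_L {t : List (Tm A)} {tp : List (Tm (A × Nat))} (h : LabL t tp) :
    (atomsL tp).map Prod.fst = atomsL t := by
  cases h with
  | nil => simp [atomsL]
  | cons h1 h2 => simp [atomsL, lab_atoms_S h1, lab_atoms_L h2]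
end

mutual
theorem lab_map_S (f : A × Nat → A × Nat) {t : Tm A} {tp tp' : Tm (A × Nat)}
    (h : LabS t tp) (h' : LabS t tp')
    (hm : (atomsS tp).map f = atomsS tp') : mapS f tp = tp' := by
  cases h with
  | atom a i =>
      cases h' with
      | atom _ j =>
          simp only [atomsS, List.map_cons, List.map_nil, List.cons.injEq] at hm
          simp [mapS, hm.1]
  | @comp w w1 t t1 hw1 hl1 =>
      cases h' with
      | @comp _ w2 _ t2 hw2 hl2 =>
          have hlen : (w1.map f).length = w2.length := by
            have e1 : w1.length = w.length := by rw [← hw1, List.length_map]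
            have e2 : w2.length = w.length := by rw [← hw2, List.length_map]
            simp [e1, e2]
          simp only [atomsS, List.map_append] at hm
          obtain ⟨hmw, hma⟩ := List.append_inj hm hlen
          simp [mapS, hmw, lab_map_L f hl1 hl2 hma]
theorem lab_map_L (f : A × Nat → A × Nat) {t : List (Tm A)}
    {tp tp' : List (Tm (A × Nat))} (h : LabL t tp) (h' : LabL t tp')
    (hm : (atomsL tp).map f = atomsL tp') : mapL f tp = tp' := by
  cases h with
  | nil => cases h'; rfl
  | @cons a a1 as as1 h1 h2 =>
      cases h' with
      | @cons _ a2 _ as2 h1' h2' =>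
          have hlen : ((atomsS a1).map f).length = (atomsS a2).length := by
            have e1 : (atomsS a1).length = (atomsS a).length := by
              rw [← lab_atoms_S h1, List.length_map]
            have e2 : (atomsS a2).length = (atomsS a).length := by
              rw [← lab_atoms_S h1', List.length_map]
            simp [e1, e2]
          simp only [atomsL, List.map_append] at hm
          obtain ⟨hm1, hm2⟩ := List.append_inj hm hlen
          simp [mapL, lab_map_S f h1 h1' hm1, lab_map_L f h2 h2' hm2]
end

/-- Two duplicate-free lists of labelled atoms with the same underlying atoms
are related by a label-preserving permutation. -/
theorem exists_perm (l l' : List (A × Nat))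
    (h : l.map Prod.fst = l'.map Prod.fst) (hn : l.Nodup) (hn' : l'.Nodup) :
    ∃ π : Equiv.Perm (A × Nat), (∀ x, (π x).1 = x.1) ∧ l.map π = l' := by
  classical
  induction l generalizing l' with
  | nil =>
      cases l' with
      | nil => exact ⟨Equiv.refl _, fun x => rfl, rfl⟩
      | cons y L' => simp at h
  | cons x L ih =>
      cases l' with
      | nil => simp at h
      | cons x' L' =>
          simp only [List.map_cons, List.cons.injEq] at h
          obtain ⟨hx, hL⟩ := h
          obtain ⟨ρ, hρ1, hρ2⟩ := ih L' hL hn.of_cons hn'.of_cons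
          refine ⟨ρ.trans (Equiv.swap x' (ρ x)), ?_, ?_⟩
          · intro z
            have hba : x'.1 = (ρ x).1 := by rw [hρ1 x, hx]
            simp only [Equiv.trans_apply]
            rcases eq_or_ne (ρ z) x' with h1 | h1
            · rw [h1, Equiv.swap_apply_left, ← hba, ← h1, hρ1]
            · rcases eq_or_ne (ρ z) (ρ x) with h2 | h2
              · rw [h2, Equiv.swap_apply_right, hba, ← h2, hρ1]
              · rw [Equiv.swap_apply_of_ne_of_ne h1 h2, hρ1]
          · simp only [List.map_cons, Equiv.trans_apply, Equiv.swap_apply_right,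
              List.cons.injEq]
            refine ⟨trivial, ?_⟩
            rw [← hρ2]
            refine List.map_congr_left fun y hy => ?_
            have hne1 : ρ y ≠ x' := by
              intro hc
              have : ρ y ∈ L' := hρ2 ▸ List.mem_map_of_mem (f := ⇑ρ) hy
              rw [hc] at this
              exact (List.nodup_cons.mp hn').1 this
            have hne2 : ρ y ≠ ρ x := by
              intro hc
              exact (List.nodup_cons.mp hn).1 (ρ.injective hc ▸ hy)
            exact Equiv.swap_apply_of_ne_of_ne hne1 hne2

theorem instMap_cancel (π : Equiv.Perm (A × Nat)) (σ : Inst (A × Nat)) :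
    instMap π.symm (instMap π σ) = σ := by
  have hid : ((π.symm : A × Nat → A × Nat) ∘ π) = id :=
    funext fun x => π.symm_apply_apply x
  cases σ with
  | mk tv wv =>
      simp only [instMap]
      congr 1
      · funext X; rw [mapL_comp, hid, mapL_id]
      · funext x; simp

theorem instMap_cancel' (π : Equiv.Perm (A × Nat)) (σ : Inst (A × Nat)) :
    instMap π (instMap π.symm σ) = σ := by
  simpa using instMap_cancel π.symm σ

/-- Relabelling by a label-preserving permutation maps one match set into the
other. -/
theorem matchSet_mapsTo (P O : List (OT A)) (u : List (Tm A))
    (tp tp' : List (Tm (A × Nat))) (f : A × Nat → A × Nat)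
    (hf : ∀ x, (f x).1 = x.1) (hm : mapL f tp = tp') :
    Set.MapsTo (instMap f) (MatchSet P O tp u) (MatchSet P O tp' u) := by
  rintro σ ⟨c1, c2, ⟨P', hP'1, hP'2⟩, c4⟩
  refine ⟨?_, ?_, ⟨mapOL f P', labOL_map f hf hP'1, ?_⟩, ?_⟩
  · intro X hX
    have := c1 X hX
    simp [instMap, this, mapL]
  · intro x hx
    have := c2 x hx
    simp [instMap, this]
  · rw [subst_map_L, ← hm]
    exact cong_map f hP'2
  · rw [eraseInst_instMap f hf]
    exact c4

end Aux

/-- The count in the canonical rate function does not depend on the choice of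
the completely labelled version of `t`. -/
theorem canonical_count_independent {A : Type} (P O : List (OT A))
    (t u : List (Tm A)) (tp tp' : List (Tm (A × Nat)))
    (h1 : LabL t tp) (h1' : CompletelyLabeled tp)
    (h2 : LabL t tp') (h2' : CompletelyLabeled tp') :
    (MatchSet P O tp u).ncard = (MatchSet P O tp' u).ncard := by
  -- find a label-preserving permutation sending `tp` to `tp'`
  have hfst : (atomsL tp).map Prod.fst = (atomsL tp').map Prod.fst := by
    rw [lab_atoms_L h1, lab_atoms_L h2]
  obtain ⟨π, hπ1, hπ2⟩ := exists_perm (atomsL tp) (atomsL tp') hfst h1' h2'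
  have hmap : mapL π tp = tp' := lab_map_L π h1 h2 hπ2
  have hπ1' : ∀ x, ((π.symm : Equiv.Perm (A × Nat)) x).1 = x.1 := by
    intro x
    have := hπ1 (π.symm x)
    rw [π.apply_symm_apply] at this
    exact this.symm
  have hmap' : mapL (π.symm : Equiv.Perm (A × Nat)) tp' = tp := by
    rw [← hmap, mapL_comp]
    have hid : ((π.symm : A × Nat → A × Nat) ∘ π) = id :=
      funext fun x => π.symm_apply_apply x
    rw [hid, mapL_id]
  have hto := matchSet_mapsTo P O u tp tp' π hπ1 hmap
  have hfrom := matchSet_mapsTo P O u tp' tp (π.symm : Equiv.Perm (A × Nat)) hπ1' hmap'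
  have hbij : Set.BijOn (instMap π) (MatchSet P O tp u) (MatchSet P O tp' u) := by
    refine Set.InvOn.bijOn ⟨?_, ?_⟩ hto hfrom
    · intro σ _; exact instMap_cancel π σ
    · intro σ _; exact instMap_cancel' π σ
  rw [← hbij.image_eq, Set.ncard_image_of_injOn hbij.injOn]

end CWC
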